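/- Let v = (v_0, ..., v_{2k}) be a real sequence with v_0 > 0 whose Hankel matrix A_v = (v_{i+j})_{i,j=0}^k is positive semidefinite and singular, with rank r := min{i : column v_i of A_v lies in the span of columns v_0,...,v_{i-1}} satisfying r ≤ k. Then the top-left (r)×(r) corner A_v(r-1) = (v_{i+j})_{i,j=0}^{r-1} is positive definite. -/

import Mathlib

open Matrix MeasureTheory

noncomputable section

/-- The `(k+1) × (k+1)` Hankel matrix `A_v = (v_{i+j})_{i,j=0}^k`. -/
def hankel (k : ℕ) (v : ℕ → ℝ) : Matrix (Fin (k+1)) (Fin (k+1)) ℝ :=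
  Matrix.of fun i j => v (i.1 + j.1)

/-- The top-left `r × r` corner `A_v(r-1) = (v_{i+j})_{i,j=0}^{r-1}`. -/
def hcorner (v : ℕ → ℝ) (r : ℕ) : Matrix (Fin r) (Fin r) ℝ :=
  Matrix.of fun i j => v (i.1 + j.1)

/-- The `(j+1)`-th column of the Hankel matrix `A_v`. -/
def hcol (k : ℕ) (v : ℕ → ℝ) (j : ℕ) : Fin (k+1) → ℝ :=
  fun i => v (i.1 + j)

/-- `r = rank v`: column `v_r` lies in the span of the preceding columns, and `r`
is minimal with this property. -/
def seqRank (k : ℕ) (v : ℕ → ℝ) (r : ℕ) : Prop :=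
  hcol k v r ∈ Submodule.span ℝ (hcol k v '' {j | j < r}) ∧
  ∀ i < r, hcol k v i ∉ Submodule.span ℝ (hcol k v '' {j | j < i})

/-- `φ = A_v(r-1)⁻¹ (v_r,…,v_{2r-1})ᵀ`. -/
def phi (v : ℕ → ℝ) (r : ℕ) : Fin r → ℝ :=
  (hcorner v r)⁻¹.mulVec fun i => v (r + i.1)

lemma sum_castLE (k r : ℕ) (hr : r ≤ k + 1) (f : Fin (k+1) → ℝ)
    (hf : ∀ i : Fin (k+1), r ≤ i.1 → f i = 0) :
    ∑ i, f i = ∑ i : Fin r, f (Fin.castLE hr i) := by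
  classical
  set F : ℕ → ℝ := fun n => if h : n < k + 1 then f ⟨n, h⟩ else 0 with hF
  have h1 : ∑ i : Fin (k+1), f i = ∑ n ∈ Finset.range (k+1), F n := by
    rw [← Fin.sum_univ_eq_sum_range]
    exact Finset.sum_congr rfl fun i _ => by simp only [hF]; rw [dif_pos i.2]
  have h2 : ∑ i : Fin r, f (Fin.castLE hr i) = ∑ n ∈ Finset.range r, F n := by
    rw [← Fin.sum_univ_eq_sum_range]
    refine Finset.sum_congr rfl fun i _ => ?_
    have hi : (i : ℕ) < k + 1 := lt_of_lt_of_le i.2 hr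
    simp only [hF]
    rw [dif_pos hi]
    rfl
  rw [h1, h2]
  refine (Finset.sum_subset (Finset.range_subset_range.2 hr) fun n hn hn' => ?_).symm
  simp only [Finset.mem_range] at hn hn'
  simp only [hF]
  rw [dif_pos hn]
  exact hf _ (le_of_not_gt hn')

theorem stmt0 (k r : ℕ) (v : ℕ → ℝ) (hv0 : 0 < v 0)
    (hpsd : (hankel k v).PosSemidef) (hsing : (hankel k v).det = 0)
    (hr : r ≤ k) (hrank : seqRank k v r) :
    (hcorner v r).PosDef := by
  classical
  have hrk : r ≤ k + 1 := le_trans hr (Nat.le_succ k)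
  set e : Fin r → Fin (k+1) := Fin.castLE hrk with he
  -- corner is PSD
  have hcsub : hcorner v r = (hankel k v).submatrix e e := rfl
  have hcpsd : (hcorner v r).PosSemidef := by
    rw [hcsub]; exact hpsd.submatrix e
  refine ⟨hcpsd.1, fun x hx => ?_⟩
  rcases lt_or_eq_of_le (hcpsd.2 x) with h | h
  · exact h
  exfalso
  -- extend x by zero
  set y : Fin (k+1) → ℝ := fun i => if h : i.1 < r then x ⟨i.1, h⟩ else 0 with hy
  have hy_e : ∀ i : Fin r, y (e i) = x i := by
    intro i; simp [hy, he, i.2]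
  have hy_zero : ∀ i : Fin (k+1), r ≤ i.1 → y i = 0 := by
    intro i hi; simp [hy, Nat.not_lt.2 hi]
  -- quadratic form of the extension equals the corner form
  have hmv : ∀ i : Fin r, (hankel k v).mulVec y (e i) = (hcorner v r).mulVec x i := by
    intro i
    unfold Matrix.mulVec dotProduct
    rw [sum_castLE k r hrk _ (fun j hj => by rw [hy_zero j hj]; ring)]
    exact Finset.sum_congr rfl fun j _ => by rw [hy_e]; rfl
  have hq : star y ⬝ᵥ (hankel k v).mulVec y = 0 := by
    have : star y ⬝ᵥ (hankel k v).mulVec y = star x ⬝ᵥ (hcorner v r).mulVec x := by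
      unfold dotProduct
      rw [sum_castLE k r hrk _ (fun i hi => by
        simp only [Pi.star_apply, star_trivial]; rw [hy_zero i hi]; ring)]
      exact Finset.sum_congr rfl fun i _ => by
        simp only [Pi.star_apply, star_trivial]; rw [hy_e, hmv]
    rw [this, h]
    simp [Finsupp.sum_fintype, dotProduct, Matrix.mulVec, Finset.mul_sum, mul_assoc]
  -- PSD kernel: mulVec y = 0
  have hker : (hankel k v).mulVec y = 0 := (hpsd.dotProduct_mulVec_zero_iff y).mp hq
  -- linear relation among columns
  have hrel : ∑ j : Fin (k+1), y j • hcol k v j.1 = 0 := by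
    funext i
    have := congrFun hker i
    simp only [Matrix.mulVec, dotProduct, hankel, Matrix.of_apply, Pi.zero_apply] at this
    simpa [hcol, Finset.sum_apply, mul_comm] using this
  -- maximal nonzero coefficient
  set S : Finset (Fin (k+1)) := Finset.univ.filter (fun j => y j ≠ 0) with hS
  have hSne : S.Nonempty := by
    obtain ⟨i, hi⟩ := Finsupp.ne_iff.mp hx
    refine ⟨e i, ?_⟩
    simp only [hS, Finset.mem_filter, Finset.mem_univ, true_and, hy_e]
    simpa using hi
  set m := S.max' hSne with hm
  have hym : y m ≠ 0 := by
    have := S.max'_mem hSne; simp [hS] at this; exact this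
  have hmr : m.1 < r := by
    by_contra hge
    exact hym (hy_zero m (le_of_not_gt hge))
  -- col m is in span of earlier columns
  have hmem : hcol k v m.1 ∈ Submodule.span ℝ (hcol k v '' {j | j < m.1}) := by
    have hsum : ∑ j ∈ Finset.univ.erase m, y j • hcol k v j.1 ∈
        Submodule.span ℝ (hcol k v '' {j | j < m.1}) := by
      refine Submodule.sum_mem _ fun j hj => ?_
      by_cases hyj : y j = 0
      · simp [hyj]
      · have hjS : j ∈ S := by simp [hS, hyj]
        have hjm : j ≤ m := S.le_max' j hjS
        have hne : j ≠ m := (Finset.mem_erase.mp hj).1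
        have hlt : j.1 < m.1 :=
          lt_of_le_of_ne (Fin.le_iff_val_le_val.mp hjm) fun hh => hne (Fin.ext hh)
        exact Submodule.smul_mem _ _ (Submodule.subset_span ⟨j.1, hlt, rfl⟩)
    have heq : y m • hcol k v m.1 = - ∑ j ∈ Finset.univ.erase m, y j • hcol k v j.1 := by
      have h0 := hrel
      rw [← Finset.add_sum_erase _ _ (Finset.mem_univ m)] at h0
      exact eq_neg_of_add_eq_zero_left h0
    have hc : hcol k v m.1 = (y m)⁻¹ • (y m • hcol k v m.1) := by
      rw [smul_smul, inv_mul_cancel₀ hym, one_smul]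
    rw [hc, heq]
    exact Submodule.smul_mem _ _ (Submodule.neg_mem _ hsum)
  exact hrank.2 m.1 hmr hmem
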